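/- Under the hypotheses of the linearization estimate theorem, the nonlinear system [vec(ΔA); θΔb] = -J_ILS†AᵀΣ_{pq}r_y + J_ILS†ΔAᵀΣ_{pq}(ΔAy-Δb) has a solution in the closed ball S = {(ΔA, Δb) : ‖[ΔA, θΔb]‖_F ≤ ξ*}, where ξ* = 2μ̄/(1 + √(1 - 4η₁‖J_ILS†‖₂μ̄)), provided 4η₁‖J_ILS†‖₂μ̄ < 1. -/

import Mathlib

open Matrix Kronecker

noncomputable section

/-- The signature matrix `Σ_{pq} = diag(I_p, -I_q)`. -/
def Sig (p q : ℕ) : Matrix (Fin p ⊕ Fin q) (Fin p ⊕ Fin q) ℝ :=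
  Matrix.fromBlocks 1 0 0 (-1)

/-- Column-stacking vectorization of a matrix (indexed by (column, row)). -/
def vecCol {m n : Type*} (A : Matrix m n ℝ) : n × m → ℝ := fun ji => A ji.2 ji.1

/-- Euclidean (2-)norm of a vector. -/
def euclNorm {ι : Type*} [Fintype ι] (v : ι → ℝ) : ℝ :=
  Real.sqrt (∑ i, v i ^ 2)

/-- Frobenius norm of a matrix. -/
def frob {ι κ : Type*} [Fintype ι] [Fintype κ] (M : Matrix ι κ ℝ) : ℝ :=
  Real.sqrt (∑ i, ∑ j, M i j ^ 2)

/-- Spectral norm (2-operator norm) of a matrix. -/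
def specNorm {ι κ : Type*} [Fintype ι] [Fintype κ] (M : Matrix ι κ ℝ) : ℝ :=
  sSup {t | ∃ v : κ → ℝ, euclNorm v = 1 ∧ t = euclNorm (M.mulVec v)}

/-- Moore–Penrose pseudoinverse of a full-row-rank matrix: `M† = Mᵀ(MMᵀ)⁻¹`. -/
def pinvFRR {ι κ : Type*} [Fintype ι] [Fintype κ] [DecidableEq ι]
    (M : Matrix ι κ ℝ) : Matrix κ ι ℝ :=
  Mᵀ * (M * Mᵀ)⁻¹

/-- The matrix `J_ILS = [ I_n ⊗ r_yᵀΣ − AᵀΣ(yᵀ ⊗ I_m) , θ⁻¹ AᵀΣ ]`. -/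
def JILS (p q n : ℕ) (A : Matrix (Fin p ⊕ Fin q) (Fin n) ℝ)
    (ry : Fin p ⊕ Fin q → ℝ) (y : Fin n → ℝ) (θ : ℝ) :
    Matrix (Fin n) ((Fin n × (Fin p ⊕ Fin q)) ⊕ (Fin p ⊕ Fin q)) ℝ :=
  Matrix.fromCols
    ((Matrix.reindex (Equiv.prodPUnit (Fin n)) (Equiv.refl _)
        ((1 : Matrix (Fin n) (Fin n) ℝ) ⊗ₖ Matrix.replicateRow Unit ((Sig p q).vecMul ry))) -
      (Aᵀ * Sig p q) *
        (Matrix.reindex (Equiv.punitProd (Fin p ⊕ Fin q)) (Equiv.refl _)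
          (Matrix.replicateRow Unit y ⊗ₖ (1 : Matrix (Fin p ⊕ Fin q) (Fin p ⊕ Fin q) ℝ))))
    (θ⁻¹ • (Aᵀ * Sig p q))

/-- The normwise backward error
`μ = min{‖[ΔA, θΔb]‖_F : (A+ΔA)ᵀΣ(b+Δb−(A+ΔA)y) = 0}`. -/
def bwerr (p q n : ℕ) (A : Matrix (Fin p ⊕ Fin q) (Fin n) ℝ)
    (b : Fin p ⊕ Fin q → ℝ) (y : Fin n → ℝ) (θ : ℝ) : ℝ :=
  sInf {t | ∃ (ΔA : Matrix (Fin p ⊕ Fin q) (Fin n) ℝ) (Δb : Fin p ⊕ Fin q → ℝ),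
    (A + ΔA)ᵀ.mulVec ((Sig p q).mulVec (b + Δb - (A + ΔA).mulVec y)) = 0 ∧
      t = frob (Matrix.fromCols ΔA (Matrix.replicateCol Unit (θ • Δb)))}

/-- Linearization estimate `μ̄ = ‖J_ILS† AᵀΣ r_y‖₂` of the backward error. -/
def muBar (p q n : ℕ) (A : Matrix (Fin p ⊕ Fin q) (Fin n) ℝ)
    (b : Fin p ⊕ Fin q → ℝ) (y : Fin n → ℝ) (θ : ℝ) : ℝ :=
  euclNorm ((pinvFRR (JILS p q n A (b - A.mulVec y) y θ)).mulVec
    ((Aᵀ * Sig p q).mulVec (b - A.mulVec y)))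

/-! ### Auxiliary lemmas on `euclNorm`, `frob`, `specNorm` -/

section NormLemmas

variable {ι κ : Type*} [Fintype ι] [Fintype κ]

lemma euclNorm_nonneg (v : ι → ℝ) : 0 ≤ euclNorm v := Real.sqrt_nonneg _

lemma sq_euclNorm (v : ι → ℝ) : euclNorm v ^ 2 = ∑ i, v i ^ 2 :=
  Real.sq_sqrt (Finset.sum_nonneg fun _ _ => sq_nonneg _)

lemma euclNorm_eq_norm (v : ι → ℝ) :
    euclNorm v = ‖(WithLp.equiv 2 (ι → ℝ)).symm v‖ := by
  rw [EuclideanSpace.norm_eq]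
  simp [euclNorm, Real.norm_eq_abs, sq_abs]

lemma euclNorm_add_le (u v : ι → ℝ) : euclNorm (u + v) ≤ euclNorm u + euclNorm v := by
  simp only [euclNorm_eq_norm, WithLp.equiv_symm_apply, WithLp.toLp_add]
  exact norm_add_le _ _

lemma euclNorm_neg (v : ι → ℝ) : euclNorm (-v) = euclNorm v := by
  simp [euclNorm]

lemma euclNorm_smul (a : ℝ) (v : ι → ℝ) : euclNorm (a • v) = |a| * euclNorm v := by
  simp only [euclNorm, Pi.smul_apply, smul_eq_mul, mul_pow, ← Finset.mul_sum]
  rw [Real.sqrt_mul (sq_nonneg a), Real.sqrt_sq_eq_abs]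

lemma euclNorm_eq_zero {v : ι → ℝ} (h : euclNorm v = 0) : v = 0 := by
  have h2 : ∑ i, v i ^ 2 = 0 := by
    have := sq_euclNorm v; rw [h] at this; simpa using this.symm
  funext i
  have := (Finset.sum_eq_zero_iff_of_nonneg (fun i _ => sq_nonneg (v i))).mp h2 i
    (Finset.mem_univ i)
  exact pow_eq_zero_iff (n := 2) (by norm_num) |>.mp this

lemma frob_nonneg (M : Matrix ι κ ℝ) : 0 ≤ frob M := Real.sqrt_nonneg _

lemma euclNorm_mulVec_le_frob (M : Matrix ι κ ℝ) (v : κ → ℝ) :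
    euclNorm (M.mulVec v) ≤ frob M * euclNorm v := by
  rw [euclNorm, frob, euclNorm, ← Real.sqrt_mul (x := ∑ i, ∑ j, M i j ^ 2) (Finset.sum_nonneg fun _ _ =>
    Finset.sum_nonneg fun _ _ => sq_nonneg _)]
  apply Real.sqrt_le_sqrt
  rw [Finset.sum_mul]
  refine Finset.sum_le_sum fun i _ => ?_
  simpa [Matrix.mulVec, dotProduct] using
    Finset.sum_mul_sq_le_sq_mul_sq Finset.univ (fun j => M i j) v

lemma frob_transpose (M : Matrix ι κ ℝ) : frob Mᵀ = frob M := by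
  rw [frob, frob, Finset.sum_comm]
  rfl

lemma specNorm_bddAbove (M : Matrix ι κ ℝ) :
    BddAbove {t | ∃ v : κ → ℝ, euclNorm v = 1 ∧ t = euclNorm (M.mulVec v)} := by
  refine ⟨frob M, fun t ht => ?_⟩
  obtain ⟨v, hv, rfl⟩ := ht
  calc euclNorm (M.mulVec v) ≤ frob M * euclNorm v := euclNorm_mulVec_le_frob M v
    _ = frob M := by rw [hv, mul_one]

lemma specNorm_nonneg (M : Matrix ι κ ℝ) : 0 ≤ specNorm M := by
  by_cases h : ({t | ∃ v : κ → ℝ, euclNorm v = 1 ∧ t = euclNorm (M.mulVec v)} : Set ℝ).Nonempty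
  · obtain ⟨t, v, hv, rfl⟩ := h
    exact le_trans (euclNorm_nonneg _) (le_csSup (specNorm_bddAbove M) ⟨v, hv, rfl⟩)
  · rw [Set.not_nonempty_iff_eq_empty] at h
    rw [specNorm, h, Real.sSup_empty]

lemma euclNorm_mulVec_le_spec (M : Matrix ι κ ℝ) (v : κ → ℝ) :
    euclNorm (M.mulVec v) ≤ specNorm M * euclNorm v := by
  by_cases hv : euclNorm v = 0
  · rw [euclNorm_eq_zero hv]
    simp [euclNorm, Matrix.mulVec_zero]
  · have hv0 : 0 < euclNorm v := lt_of_le_of_ne (euclNorm_nonneg v) (Ne.symm hv)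
    set u : κ → ℝ := (euclNorm v)⁻¹ • v with hu
    have hu1 : euclNorm u = 1 := by
      rw [hu, euclNorm_smul, abs_of_nonneg (inv_nonneg.mpr hv0.le), inv_mul_cancel₀ hv]
    have hmem : euclNorm (M.mulVec u) ≤ specNorm M :=
      le_csSup (specNorm_bddAbove M) ⟨u, hu1, rfl⟩
    have hMu : euclNorm (M.mulVec u) = (euclNorm v)⁻¹ * euclNorm (M.mulVec v) := by
      rw [hu, Matrix.mulVec_smul, euclNorm_smul, abs_of_nonneg (inv_nonneg.mpr hv0.le)]
    rw [hMu] at hmem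
    calc euclNorm (M.mulVec v) = euclNorm v * ((euclNorm v)⁻¹ * euclNorm (M.mulVec v)) := by
          field_simp
      _ ≤ euclNorm v * specNorm M := mul_le_mul_of_nonneg_left hmem hv0.le
      _ = specNorm M * euclNorm v := mul_comm _ _

end NormLemmas

/-! ### The Banach fixed point argument -/

lemma exists_fixedPoint_of_contracting {I : Type*} [Fintype I]
    (Φ : (I → ℝ) → (I → ℝ)) (ξ L : ℝ) (hξ : 0 ≤ ξ) (hL0 : 0 ≤ L) (hL : L < 1)
    (hmaps : ∀ x, euclNorm x ≤ ξ → euclNorm (Φ x) ≤ ξ)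
    (hlip : ∀ x x', euclNorm x ≤ ξ → euclNorm x' ≤ ξ →
      euclNorm (Φ x - Φ x') ≤ L * euclNorm (x - x')) :
    ∃ x : I → ℝ, euclNorm x ≤ ξ ∧ Φ x = x := by
  classical
  set e := WithLp.equiv 2 (I → ℝ) with he
  have hnorm : ∀ z : EuclideanSpace ℝ I, ‖z‖ = euclNorm (e z) := by
    intro z
    rw [euclNorm_eq_norm, Equiv.symm_apply_apply]
  set ΦX : EuclideanSpace ℝ I → EuclideanSpace ℝ I := fun z => e.symm (Φ (e z)) with hΦX
  set s : Set (EuclideanSpace ℝ I) := Metric.closedBall 0 ξ with hs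
  have hmem : ∀ z : EuclideanSpace ℝ I, z ∈ s ↔ euclNorm (e z) ≤ ξ := by
    intro z
    rw [hs, Metric.mem_closedBall, dist_zero_right, hnorm]
  have hsf : Set.MapsTo ΦX s s := by
    intro z hz
    rw [hmem] at hz ⊢
    rw [hΦX]
    simpa [Equiv.apply_symm_apply] using hmaps (e z) hz
  have hsc : IsComplete s := Metric.isClosed_closedBall.isComplete
  have hdist : ∀ z w : EuclideanSpace ℝ I, dist z w = euclNorm (e z - e w) := by
    intro z w
    rw [dist_eq_norm, hnorm]
    rfl
  have hcontr : ContractingWith L.toNNReal (hsf.restrict ΦX s s) := by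
    constructor
    · rw [← NNReal.coe_lt_coe, Real.coe_toNNReal L hL0]
      exact_mod_cast hL
    · apply LipschitzWith.of_dist_le_mul
      rintro ⟨z, hz⟩ ⟨w, hw⟩
      rw [Subtype.dist_eq, Subtype.dist_eq]
      show dist (ΦX z) (ΦX w) ≤ _
      rw [hdist, hdist, Real.coe_toNNReal L hL0]
      rw [hmem] at hz hw
      have := hlip (e z) (e w) hz hw
      simpa [hΦX, Equiv.apply_symm_apply] using this
  have h0s : (0 : EuclideanSpace ℝ I) ∈ s := by
    rw [hmem]
    have : e (0 : EuclideanSpace ℝ I) = 0 := rfl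
    rw [this]
    simpa [euclNorm] using hξ
  have hed : edist (0 : EuclideanSpace ℝ I) (ΦX 0) ≠ ⊤ := edist_ne_top _ _
  set z := ContractingWith.efixedPoint' ΦX hsc hsf hcontr 0 h0s hed with hz
  have hzmem : z ∈ s := ContractingWith.efixedPoint_mem' hsc hsf hcontr h0s hed
  have hzfix : ΦX z = z := ContractingWith.efixedPoint_isFixedPt' hsc hsf hcontr h0s hed
  refine ⟨e z, (hmem z).mp hzmem, ?_⟩
  have := congrArg e hzfix
  rwa [hΦX, Equiv.apply_symm_apply] at this

/-! ### Decoding a stacked vector into a perturbation `(ΔA, Δb)` -/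

/-- decode `ΔA` from a stacked vector -/
def dAx (p q n : ℕ) (x : (Fin n × (Fin p ⊕ Fin q)) ⊕ (Fin p ⊕ Fin q) → ℝ) :
    Matrix (Fin p ⊕ Fin q) (Fin n) ℝ := fun i j => x (Sum.inl (j, i))

/-- decode `Δb` from a stacked vector -/
def dbx (p q n : ℕ) (θ : ℝ) (x : (Fin n × (Fin p ⊕ Fin q)) ⊕ (Fin p ⊕ Fin q) → ℝ) :
    Fin p ⊕ Fin q → ℝ := fun i => θ⁻¹ * x (Sum.inr i)

/-- The residual-type vector `ΔA y − Δb`. -/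
def Fv (p q n : ℕ) (θ : ℝ) (y : Fin n → ℝ)
    (x : (Fin n × (Fin p ⊕ Fin q)) ⊕ (Fin p ⊕ Fin q) → ℝ) : Fin p ⊕ Fin q → ℝ :=
  (dAx p q n x).mulVec y - dbx p q n θ x

/-- The quadratic term `ΔAᵀ Σ (ΔA y − Δb)`. -/
def Qv (p q n : ℕ) (θ : ℝ) (y : Fin n → ℝ)
    (x : (Fin n × (Fin p ⊕ Fin q)) ⊕ (Fin p ⊕ Fin q) → ℝ) : Fin n → ℝ :=
  ((dAx p q n x)ᵀ * Sig p q).mulVec (Fv p q n θ y x)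

lemma decode (p q n : ℕ) (θ : ℝ) (hθ : θ ≠ 0)
    (x : (Fin n × (Fin p ⊕ Fin q)) ⊕ (Fin p ⊕ Fin q) → ℝ) :
    Sum.elim (vecCol (dAx p q n x)) (θ • dbx p q n θ x) = x := by
  funext i
  cases i with
  | inl ji => rfl
  | inr i =>
      show θ * (θ⁻¹ * x (Sum.inr i)) = x (Sum.inr i)
      rw [← mul_assoc, mul_inv_cancel₀ hθ, one_mul]

lemma sum_split (p q n : ℕ)
    (x : (Fin n × (Fin p ⊕ Fin q)) ⊕ (Fin p ⊕ Fin q) → ℝ) :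
    ∑ k, x k ^ 2 = (∑ i : Fin p ⊕ Fin q, ∑ j : Fin n, x (Sum.inl (j, i)) ^ 2)
      + ∑ i : Fin p ⊕ Fin q, x (Sum.inr i) ^ 2 := by
  rw [Fintype.sum_sum_type, Fintype.sum_prod_type, Finset.sum_comm]

lemma frob_dAx_le (p q n : ℕ)
    (x : (Fin n × (Fin p ⊕ Fin q)) ⊕ (Fin p ⊕ Fin q) → ℝ) :
    frob (dAx p q n x) ≤ euclNorm x := by
  rw [frob, euclNorm]
  apply Real.sqrt_le_sqrt
  rw [sum_split p q n x]
  have : (0:ℝ) ≤ ∑ i : Fin p ⊕ Fin q, x (Sum.inr i) ^ 2 :=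
    Finset.sum_nonneg fun _ _ => sq_nonneg _
  show (∑ i, ∑ j, dAx p q n x i j ^ 2) ≤ _
  simp only [dAx]
  exact le_add_of_nonneg_right this

lemma frob_fromColumns (p q n : ℕ) (θ : ℝ) (hθ : θ ≠ 0)
    (x : (Fin n × (Fin p ⊕ Fin q)) ⊕ (Fin p ⊕ Fin q) → ℝ) :
    frob (Matrix.fromCols (dAx p q n x) (Matrix.replicateCol Unit (θ • dbx p q n θ x))) =
      euclNorm x := by
  have step : frob (Matrix.fromCols (dAx p q n x)
      (Matrix.replicateCol Unit (θ • dbx p q n θ x))) =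
      Real.sqrt ((∑ i : Fin p ⊕ Fin q, ∑ j : Fin n, x (Sum.inl (j, i)) ^ 2)
        + ∑ i : Fin p ⊕ Fin q, (θ * (θ⁻¹ * x (Sum.inr i))) ^ 2) := by
    rw [frob]
    congr 1
    rw [← Finset.sum_add_distrib]
    refine Finset.sum_congr rfl fun i _ => ?_
    rw [Fintype.sum_sum_type]
    simp [Matrix.fromCols, dAx, dbx, Matrix.replicateCol]
  rw [step, euclNorm, sum_split p q n x]
  congr 2
  refine Finset.sum_congr rfl fun i _ => ?_
  rw [← mul_assoc, mul_inv_cancel₀ hθ, one_mul]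

lemma sig_mulVec (p q : ℕ) (w : Fin p ⊕ Fin q → ℝ) :
    (Sig p q).mulVec w =
      Sum.elim (fun i => w (Sum.inl i)) (fun i => -w (Sum.inr i)) := by
  funext i
  cases i with
  | inl a =>
      simp [Sig, Matrix.mulVec, dotProduct, Fintype.sum_sum_type,
        Matrix.fromBlocks, Matrix.one_apply]
  | inr a =>
      simp [Sig, Matrix.mulVec, dotProduct, Fintype.sum_sum_type,
        Matrix.fromBlocks, Matrix.one_apply]

lemma euclNorm_sig_mulVec (p q : ℕ) (w : Fin p ⊕ Fin q → ℝ) :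
    euclNorm ((Sig p q).mulVec w) = euclNorm w := by
  rw [sig_mulVec, euclNorm, euclNorm]
  congr 1
  rw [Fintype.sum_sum_type, Fintype.sum_sum_type]
  simp

lemma Q_bound (p q n : ℕ) (u : (Fin n × (Fin p ⊕ Fin q)) ⊕ (Fin p ⊕ Fin q) → ℝ)
    (w : Fin p ⊕ Fin q → ℝ) :
    euclNorm (((dAx p q n u)ᵀ * Sig p q).mulVec w) ≤ euclNorm u * euclNorm w := by
  rw [← Matrix.mulVec_mulVec]
  calc euclNorm ((dAx p q n u)ᵀ.mulVec ((Sig p q).mulVec w))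
      ≤ frob (dAx p q n u)ᵀ * euclNorm ((Sig p q).mulVec w) := euclNorm_mulVec_le_frob _ _
    _ = frob (dAx p q n u) * euclNorm w := by rw [frob_transpose, euclNorm_sig_mulVec]
    _ ≤ euclNorm u * euclNorm w :=
        mul_le_mul_of_nonneg_right (frob_dAx_le p q n u) (euclNorm_nonneg _)

lemma F_bound (p q n : ℕ) (θ : ℝ) (y : Fin n → ℝ)
    (x : (Fin n × (Fin p ⊕ Fin q)) ⊕ (Fin p ⊕ Fin q) → ℝ) :
    euclNorm (Fv p q n θ y x) ≤ Real.sqrt (θ⁻¹ ^ 2 + euclNorm y ^ 2) * euclNorm x := by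
  have hy : euclNorm y ^ 2 = ∑ j, y j ^ 2 := sq_euclNorm y
  have hη : (0:ℝ) ≤ θ⁻¹ ^ 2 + euclNorm y ^ 2 := by positivity
  rw [show euclNorm x = Real.sqrt (∑ k, x k ^ 2) from rfl, ← Real.sqrt_mul hη]
  rw [show euclNorm (Fv p q n θ y x) = Real.sqrt (∑ i, Fv p q n θ y x i ^ 2) from rfl]
  apply Real.sqrt_le_sqrt
  have key : ∀ i, Fv p q n θ y x i ^ 2 ≤
      (θ⁻¹ ^ 2 + ∑ j, y j ^ 2) *
        ((∑ j : Fin n, x (Sum.inl (j, i)) ^ 2) + x (Sum.inr i) ^ 2) := by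
    intro i
    have hcs := Finset.sum_mul_sq_le_sq_mul_sq Finset.univ
      (Sum.elim (fun j : Fin n => x (Sum.inl (j, i))) (fun _ : Unit => x (Sum.inr i)))
      (Sum.elim y (fun _ : Unit => -θ⁻¹))
    have h1 : Fv p q n θ y x i =
        ∑ k : Fin n ⊕ Unit,
          Sum.elim (fun j : Fin n => x (Sum.inl (j, i))) (fun _ : Unit => x (Sum.inr i)) k *
            Sum.elim y (fun _ : Unit => -θ⁻¹) k := by
      simp [Fv, dAx, dbx, Matrix.mulVec, dotProduct, Fintype.sum_sum_type]
      ring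
    rw [h1]
    refine le_trans hcs (le_of_eq ?_)
    rw [Fintype.sum_sum_type, Fintype.sum_sum_type]
    simp
    ring
  calc (∑ i, Fv p q n θ y x i ^ 2)
      ≤ ∑ i : Fin p ⊕ Fin q, (θ⁻¹ ^ 2 + ∑ j, y j ^ 2) *
          ((∑ j : Fin n, x (Sum.inl (j, i)) ^ 2) + x (Sum.inr i) ^ 2) :=
        Finset.sum_le_sum fun i _ => key i
    _ = (θ⁻¹ ^ 2 + euclNorm y ^ 2) * ∑ k, x k ^ 2 := by
        rw [← Finset.mul_sum, Finset.sum_add_distrib, hy, sum_split p q n x]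

lemma dAx_sub (p q n : ℕ) (x x' : (Fin n × (Fin p ⊕ Fin q)) ⊕ (Fin p ⊕ Fin q) → ℝ) :
    dAx p q n (x - x') = dAx p q n x - dAx p q n x' := rfl

lemma Fv_sub (p q n : ℕ) (θ : ℝ) (y : Fin n → ℝ)
    (x x' : (Fin n × (Fin p ⊕ Fin q)) ⊕ (Fin p ⊕ Fin q) → ℝ) :
    Fv p q n θ y (x - x') = Fv p q n θ y x - Fv p q n θ y x' := by
  funext i
  simp [Fv, dAx, dbx, Matrix.mulVec, dotProduct, Finset.sum_sub_distrib, mul_sub]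
  ring_nf
  rw [Finset.sum_sub_distrib]
  ring

lemma Qv_sub (p q n : ℕ) (θ : ℝ) (y : Fin n → ℝ)
    (x x' : (Fin n × (Fin p ⊕ Fin q)) ⊕ (Fin p ⊕ Fin q) → ℝ) :
    Qv p q n θ y x - Qv p q n θ y x' =
      ((dAx p q n (x - x'))ᵀ * Sig p q).mulVec (Fv p q n θ y x) +
        ((dAx p q n x')ᵀ * Sig p q).mulVec (Fv p q n θ y (x - x')) := by
  rw [dAx_sub, Fv_sub, Qv, Qv, Matrix.transpose_sub, Matrix.sub_mul,
    Matrix.sub_mulVec, Matrix.mulVec_sub]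
  abel

/-- Core fixed-point existence lemma: for any matrix `P` and vector `c`,
if `4η‖P‖μ < 1` with `μ = ‖c‖`, the quadratic fixed point equation
`x = -c + P (Qv x)` has a solution in the ball of radius `ξ* = 2μ/(1+√(1−4η‖P‖μ))`. -/
lemma key_fixedPoint (p q n : ℕ) (θ : ℝ) (y : Fin n → ℝ)
    (P : Matrix ((Fin n × (Fin p ⊕ Fin q)) ⊕ (Fin p ⊕ Fin q)) (Fin n) ℝ)
    (c : (Fin n × (Fin p ⊕ Fin q)) ⊕ (Fin p ⊕ Fin q) → ℝ)
    (hsmall : 4 * Real.sqrt (θ⁻¹ ^ 2 + euclNorm y ^ 2) * specNorm P * euclNorm c < 1) :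
    ∃ x : (Fin n × (Fin p ⊕ Fin q)) ⊕ (Fin p ⊕ Fin q) → ℝ,
      euclNorm x ≤ 2 * euclNorm c / (1 + Real.sqrt (1 -
        4 * Real.sqrt (θ⁻¹ ^ 2 + euclNorm y ^ 2) * specNorm P * euclNorm c)) ∧
      -c + P.mulVec (Qv p q n θ y x) = x := by
  classical
  set μ : ℝ := euclNorm c with hμ
  set η : ℝ := Real.sqrt (θ⁻¹ ^ 2 + euclNorm y ^ 2) with hη
  set N : ℝ := specNorm P with hN
  have hμ0 : 0 ≤ μ := euclNorm_nonneg c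
  have hη0 : 0 ≤ η := Real.sqrt_nonneg _
  have hN0 : 0 ≤ N := specNorm_nonneg P
  set s : ℝ := Real.sqrt (1 - 4 * η * N * μ) with hsdef
  have h41 : 4 * η * N * μ < 1 := hsmall
  have hKμ0 : 0 ≤ 4 * η * N * μ := by positivity
  have hs2 : s ^ 2 = 1 - 4 * η * N * μ := Real.sq_sqrt (by linarith)
  have hs0 : 0 < s := Real.sqrt_pos.mpr (by linarith)
  have hs1 : s ≤ 1 := by nlinarith [hs2, hs0, hKμ0]
  set ξ : ℝ := 2 * μ / (1 + s) with hξdef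
  have h1s : (0:ℝ) < 1 + s := by linarith
  have hξ0 : 0 ≤ ξ := div_nonneg (by linarith) h1s.le
  have hquad : η * N * ξ ^ 2 + μ = ξ := by
    rw [hξdef]
    field_simp
    linear_combination μ * hs2
  set L : ℝ := 2 * (η * N) * ξ with hLdef
  have hLs : L = 1 - s := by
    rw [hLdef, hξdef]
    field_simp
    linear_combination hs2
  have hL0 : 0 ≤ L := by rw [hLs]; linarith
  have hL1 : L < 1 := by rw [hLs]; linarith
  set Φ : ((Fin n × (Fin p ⊕ Fin q)) ⊕ (Fin p ⊕ Fin q) → ℝ) →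
      ((Fin n × (Fin p ⊕ Fin q)) ⊕ (Fin p ⊕ Fin q) → ℝ) :=
    fun x => -c + P.mulVec (Qv p q n θ y x) with hΦ
  have hQest : ∀ x, euclNorm (Qv p q n θ y x) ≤ euclNorm x * (η * euclNorm x) := by
    intro x
    calc euclNorm (Qv p q n θ y x)
        ≤ euclNorm x * euclNorm (Fv p q n θ y x) := Q_bound p q n x (Fv p q n θ y x)
      _ ≤ euclNorm x * (η * euclNorm x) :=
          mul_le_mul_of_nonneg_left (F_bound p q n θ y x) (euclNorm_nonneg x)
  have hmaps : ∀ x, euclNorm x ≤ ξ → euclNorm (Φ x) ≤ ξ := by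
    intro x hx
    have hQξ : euclNorm (Qv p q n θ y x) ≤ ξ * (η * ξ) := by
      refine le_trans (hQest x) ?_
      exact mul_le_mul hx (mul_le_mul_of_nonneg_left hx hη0)
        (mul_nonneg hη0 (euclNorm_nonneg x)) hξ0
    calc euclNorm (Φ x) ≤ euclNorm (-c) + euclNorm (P.mulVec (Qv p q n θ y x)) :=
          euclNorm_add_le _ _
      _ ≤ μ + N * euclNorm (Qv p q n θ y x) := by
          rw [euclNorm_neg]
          exact add_le_add le_rfl (euclNorm_mulVec_le_spec P _)
      _ ≤ μ + N * (ξ * (η * ξ)) :=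
          add_le_add le_rfl (mul_le_mul_of_nonneg_left hQξ hN0)
      _ = η * N * ξ ^ 2 + μ := by ring
      _ = ξ := hquad
  have hlip : ∀ x x', euclNorm x ≤ ξ → euclNorm x' ≤ ξ →
      euclNorm (Φ x - Φ x') ≤ L * euclNorm (x - x') := by
    intro x x' hx hx'
    have hdiff : Φ x - Φ x' = P.mulVec (Qv p q n θ y x - Qv p q n θ y x') := by
      rw [hΦ]
      simp only
      rw [Matrix.mulVec_sub]
      abel
    have hd0 : 0 ≤ euclNorm (x - x') := euclNorm_nonneg _
    have h4 : euclNorm (((dAx p q n (x - x'))ᵀ * Sig p q).mulVec (Fv p q n θ y x)) ≤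
        euclNorm (x - x') * (η * ξ) := by
      refine le_trans (Q_bound p q n _ _) ?_
      refine mul_le_mul_of_nonneg_left ?_ hd0
      exact le_trans (F_bound p q n θ y x) (mul_le_mul_of_nonneg_left hx hη0)
    have h5 : euclNorm (((dAx p q n x')ᵀ * Sig p q).mulVec (Fv p q n θ y (x - x'))) ≤
        ξ * (η * euclNorm (x - x')) := by
      refine le_trans (Q_bound p q n _ _) ?_
      exact mul_le_mul hx' (F_bound p q n θ y _) (euclNorm_nonneg _) hξ0
    calc euclNorm (Φ x - Φ x')
        = euclNorm (P.mulVec (Qv p q n θ y x - Qv p q n θ y x')) := by rw [hdiff]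
      _ ≤ N * euclNorm (Qv p q n θ y x - Qv p q n θ y x') := euclNorm_mulVec_le_spec P _
      _ ≤ N * (euclNorm (((dAx p q n (x - x'))ᵀ * Sig p q).mulVec (Fv p q n θ y x)) +
            euclNorm (((dAx p q n x')ᵀ * Sig p q).mulVec (Fv p q n θ y (x - x')))) := by
          refine mul_le_mul_of_nonneg_left ?_ hN0
          rw [Qv_sub p q n θ y x x']
          exact euclNorm_add_le _ _
      _ ≤ N * (euclNorm (x - x') * (η * ξ) + ξ * (η * euclNorm (x - x'))) := by
          refine mul_le_mul_of_nonneg_left (add_le_add h4 h5) hN0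
      _ = L * euclNorm (x - x') := by rw [hLdef]; ring
  obtain ⟨x, hxball, hxfix⟩ :=
    exists_fixedPoint_of_contracting Φ ξ L hξ0 hL0 hL1 hmaps hlip
  exact ⟨x, hxball, hxfix⟩

/-- Under the hypotheses of the linearization estimate theorem, the nonlinear system
`[vecCol ΔA; θΔb] = −J†AᵀΣr_y + J†ΔAᵀΣ(ΔA y − Δb)` has a solution with
`‖[ΔA, θΔb]‖_F ≤ ξ* = 2μ̄/(1+√(1−4η₁‖J†‖₂μ̄))`. -/
theorem stmt7 (p q n : ℕ) (A : Matrix (Fin p ⊕ Fin q) (Fin n) ℝ)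
    (b : Fin p ⊕ Fin q → ℝ) (y : Fin n → ℝ) (θ : ℝ) (hθ : 0 < θ)
    (hrank : (JILS p q n A (b - A.mulVec y) y θ).rank = n)
    (hsmall : 4 * Real.sqrt (θ⁻¹ ^ 2 + euclNorm y ^ 2) *
        specNorm (pinvFRR (JILS p q n A (b - A.mulVec y) y θ)) *
          muBar p q n A b y θ < 1) :
    ∃ (ΔA : Matrix (Fin p ⊕ Fin q) (Fin n) ℝ) (Δb : Fin p ⊕ Fin q → ℝ),
      frob (Matrix.fromCols ΔA (Matrix.replicateCol Unit (θ • Δb))) ≤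
        2 * muBar p q n A b y θ /
          (1 + Real.sqrt (1 - 4 * Real.sqrt (θ⁻¹ ^ 2 + euclNorm y ^ 2) *
            specNorm (pinvFRR (JILS p q n A (b - A.mulVec y) y θ)) *
              muBar p q n A b y θ)) ∧
      Sum.elim (vecCol ΔA) (θ • Δb) =
        -(pinvFRR (JILS p q n A (b - A.mulVec y) y θ)).mulVec
            ((Aᵀ * Sig p q).mulVec (b - A.mulVec y)) +
          (pinvFRR (JILS p q n A (b - A.mulVec y) y θ)).mulVec
            ((ΔAᵀ * Sig p q).mulVec (ΔA.mulVec y - Δb)) := by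
  obtain ⟨x, hxball, hxfix⟩ := key_fixedPoint p q n θ y
    (pinvFRR (JILS p q n A (b - A.mulVec y) y θ))
    ((pinvFRR (JILS p q n A (b - A.mulVec y) y θ)).mulVec
      ((Aᵀ * Sig p q).mulVec (b - A.mulVec y))) hsmall
  refine ⟨dAx p q n x, dbx p q n θ x, ?_, ?_⟩
  · rw [frob_fromColumns p q n θ hθ.ne' x]
    exact hxball
  · rw [decode p q n θ hθ.ne' x]
    exact hxfix.symm

end
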